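/- There exists a (randomised) mechanism ℳ that is both maximal and individually rational: for every IKEP instance I = ⟨G,V,Γ⟩, the packing returned by ℳ(I) is with probability 1 a maximal Γ-cycle packing of G, and U_i(ℳ(I)) ≥ nat_i(I) for every country i. -/

import Mathlib

open scoped Classical

/-- An `n`-partitioned compatibility graph: a finite directed graph on a finite
set of natural-number vertices, without self-loops, whose vertex set is
partitioned into `n` nonempty countries. -/
structure PartGraph (n : ℕ) where
  verts : Finset ℕ
  arcs : Finset (ℕ × ℕ)
  arcs_mem : ∀ p ∈ arcs, p.1 ∈ verts ∧ p.2 ∈ verts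
  no_loops : ∀ v, (v, v) ∉ arcs
  country : ℕ → Fin n
  country_nonempty : ∀ i : Fin n, ∃ v ∈ verts, country v = i

/-- Cyclic access to the entries of a list. -/
def cyc (l : List ℕ) (k : ℕ) : ℕ := l.getD (k % l.length) 0

/-- `l` is a (directed) cycle of `G`: a cyclic sequence of at least two distinct
vertices, consecutive ones (cyclically) joined by arcs. -/
def IsCycle {n : ℕ} (G : PartGraph n) (l : List ℕ) : Prop :=
  2 ≤ l.length ∧ l.Nodup ∧ (∀ v ∈ l, v ∈ G.verts) ∧
    ∀ k < l.length, (cyc l k, cyc l (k + 1)) ∈ G.arcs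

/-- All vertices of `l` belong to country `i`. -/
def IsNationalTo {n : ℕ} (G : PartGraph n) (l : List ℕ) (i : Fin n) : Prop :=
  ∀ v ∈ l, G.country v = i

/-- A national cycle: all vertices in one country. -/
def IsNational {n : ℕ} (G : PartGraph n) (l : List ℕ) : Prop :=
  ∃ i, IsNationalTo G l i

/-- An international cycle: not national (equivalently, for cycles, it contains
an international arc). -/
def IsInternational {n : ℕ} (G : PartGraph n) (l : List ℕ) : Prop :=
  ¬ IsNational G l

/-- Position `k` (taken cyclically) is the start of a `V_i`-segment of `l`:
the vertex there is in country `i` but the cyclically preceding one is not. -/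
def segStart {n : ℕ} (G : PartGraph n) (l : List ℕ) (i : Fin n) (k : ℕ) : Prop :=
  G.country (cyc l k) = i ∧ G.country (cyc l (k + l.length - 1)) ≠ i

/-- The size of the run of consecutive (cyclic) positions of `l`, starting at
position `k`, whose vertices are in country `i`.  At a segment start this is
exactly the size of that `V_i`-segment. -/
noncomputable def runLen {n : ℕ} (G : PartGraph n) (l : List ℕ) (i : Fin n) (k : ℕ) : ℕ :=
  ((Finset.range l.length).filter
    fun j => ∀ j' ≤ j, G.country (cyc l (k + j')) = i).card

/-- The number of `V_i`-segments of the cycle `l`. -/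
noncomputable def numSegs {n : ℕ} (G : PartGraph n) (l : List ℕ) (i : Fin n) : ℕ :=
  ((Finset.range l.length).filter fun k => segStart G l i k).card

/-- A set `Γ` of country-specific parameters for `n` countries. -/
structure Params (n : ℕ) where
  icl : ℕ∞
  ncl : Fin n → ℕ∞
  iss : Fin n → ℕ∞
  isn : Fin n → ℕ∞
  icl_ne_one : icl ≠ 1
  ncl_ne_one : ∀ i, ncl i ≠ 1
  iss_pos : ∀ i, 1 ≤ iss i
  isn_pos : ∀ i, 1 ≤ isn i

/-- `l` is a `Γ`-cycle of `(G, 𝒱)`. -/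
def IsGammaCycle {n : ℕ} (G : PartGraph n) (Γ : Params n) (l : List ℕ) : Prop :=
  IsCycle G l ∧
    ((∃ i, IsNationalTo G l i ∧ (l.length : ℕ∞) ≤ Γ.ncl i) ∨
      (IsInternational G l ∧ (l.length : ℕ∞) ≤ Γ.icl ∧
        (∀ i, ∀ k < l.length, segStart G l i k → (runLen G l i k : ℕ∞) ≤ Γ.iss i) ∧
        (∀ i, (numSegs G l i : ℕ∞) ≤ Γ.isn i)))

/-- A cycle packing of `G`: a set of pairwise vertex-disjoint cycles. -/
def IsPacking {n : ℕ} (G : PartGraph n) (P : Finset (List ℕ)) : Prop :=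
  (∀ l ∈ P, IsCycle G l) ∧
    ∀ l ∈ P, ∀ l' ∈ P, l ≠ l' → ∀ v ∈ l, v ∉ l'

/-- The size of a cycle packing: total number of arcs (= vertices) of its cycles. -/
def packSize (P : Finset (List ℕ)) : ℕ := ∑ l ∈ P, l.length

/-- A `Γ`-cycle packing of `(G, 𝒱)`. -/
def IsGammaPackingG {n : ℕ} (G : PartGraph n) (Γ : Params n) (P : Finset (List ℕ)) : Prop :=
  IsPacking G P ∧ ∀ l ∈ P, IsGammaCycle G Γ l


/-- An IKEP instance `I = ⟨G, 𝒱, Γ⟩`. -/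
structure IKEP where
  n : ℕ
  npos : 1 ≤ n
  G : PartGraph n
  prm : Params n

/-- A `Γ`-cycle packing of the instance `I`. -/
def IsGammaPacking (I : IKEP) (P : Finset (List ℕ)) : Prop :=
  IsGammaPackingG I.G I.prm P

/-- The utility `u_i(C)` of country `i` from the cycle `C`: the number of arcs
of `C` entering country `i`, i.e. the number of vertices of `C` in country `i`. -/
noncomputable def cycUtil {n : ℕ} (G : PartGraph n) (i : Fin n) (l : List ℕ) : ℕ :=
  (l.filter fun v => G.country v = i).length

/-- The utility `u_i(𝒞)` of country `i` from a cycle packing. -/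
noncomputable def packUtil {n : ℕ} (G : PartGraph n) (i : Fin n) (P : Finset (List ℕ)) : ℕ :=
  ∑ l ∈ P, cycUtil G i l

/-- `opt(I)`: the maximum size of a `Γ`-cycle packing of `G`. -/
noncomputable def optSize (I : IKEP) : ℕ :=
  sSup {m | ∃ P, IsGammaPacking I P ∧ packSize P = m}

/-- `nat_i(I)`: the maximum size of a `Γ`-cycle packing of the subgraph
`G[V_i]` induced by country `i` (all its cycles are national, so the only
constraint from `Γ` is the national cycle limit `ncl i`). -/
noncomputable def natSize (I : IKEP) (i : Fin I.n) : ℕ :=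
  sSup {m | ∃ P, IsPacking I.G P ∧ (∀ l ∈ P, IsNationalTo I.G l i) ∧
    (∀ l ∈ P, (l.length : ℕ∞) ≤ I.prm.ncl i) ∧ packSize P = m}

/-- A (randomised) mechanism: for every IKEP instance it returns one `Γ`-cycle
packing according to a (finitely supported) probability distribution on the
set `𝒟_I` of all `Γ`-cycle packings of `G`. -/
structure Mechanism where
  dist : IKEP → (Finset (List ℕ) →₀ ℝ)
  nonneg : ∀ I P, 0 ≤ dist I P
  sum_one : ∀ I, ((dist I).sum fun _ p => p) = 1
  supp : ∀ I P, dist I P ≠ 0 → IsGammaPacking I P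

/-- The expected utility `U_i(ℳ(I))` of country `i`. -/
noncomputable def expUtil (M : Mechanism) (I : IKEP) (i : Fin I.n) : ℝ :=
  (M.dist I).sum fun P p => p * (packUtil I.G i P : ℝ)

/-- The expected social welfare `SW(ℳ(I)) = Σ_i U_i(ℳ(I))`: the expected size
of the returned packing. -/
noncomputable def sw (M : Mechanism) (I : IKEP) : ℝ :=
  (M.dist I).sum fun P p => p * (packSize P : ℝ)

/-- Individual rationality. -/
def IndRational (M : Mechanism) : Prop :=
  ∀ I : IKEP, ∀ i : Fin I.n, (natSize I i : ℝ) ≤ expUtil M I i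

/-- Efficiency. -/
def Efficient (M : Mechanism) : Prop :=
  ∀ I : IKEP, sw M I = (optSize I : ℝ)

/-- `Γ' ≤ᵢ Γ`: country `i` misreports by declaring (weakly) smaller
international segment size and segment number; all other parameters agree. -/
def ParamLE {n : ℕ} (i : Fin n) (Γ' Γ : Params n) : Prop :=
  Γ'.icl = Γ.icl ∧ Γ'.ncl = Γ.ncl ∧
    Γ'.iss i ≤ Γ.iss i ∧ Γ'.isn i ≤ Γ.isn i ∧
    (∀ h, h ≠ i → Γ'.iss h = Γ.iss h) ∧ (∀ h, h ≠ i → Γ'.isn h = Γ.isn h)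

/-- Incentive compatibility (with respect to segment size and segment number). -/
def IncentiveCompatible (M : Mechanism) : Prop :=
  ∀ I : IKEP, ∀ i : Fin I.n, ∀ Γ' : Params I.n, ParamLE i Γ' I.prm →
    expUtil M { I with prm := Γ' } i ≤ expUtil M I i

/-- An international `Γ`-cycle of the instance `I`. -/
def IsIntlGammaCycle (I : IKEP) (l : List ℕ) : Prop :=
  IsGammaCycle I.G I.prm l ∧ IsInternational I.G l

/-- `c_int(I)`: the maximum length of an international `Γ`-cycle of `G`. -/
noncomputable def cInt (I : IKEP) : ℕ :=
  sSup {s | ∃ l, IsIntlGammaCycle I l ∧ l.length = s}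


/-- A maximal `Γ`-cycle packing: not a proper subset of another `Γ`-cycle
packing of `G`. -/
def IsMaximalGammaPacking (I : IKEP) (P : Finset (List ℕ)) : Prop :=
  IsGammaPacking I P ∧ ∀ Q, IsGammaPacking I Q → P ⊆ Q → Q = P

lemma packSize_le_card {n : ℕ} (G : PartGraph n) (P : Finset (List ℕ))
    (h : IsPacking G P) : packSize P ≤ G.verts.card := by
  have hdisj : ∀ x ∈ P, ∀ y ∈ P, x ≠ y → Disjoint x.toFinset y.toFinset := by
    intro x hx y hy hxy
    rw [Finset.disjoint_left]
    intro a ha hay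
    exact h.2 x hx y hy hxy a (List.mem_toFinset.mp ha) (List.mem_toFinset.mp hay)
  calc packSize P = ∑ l ∈ P, l.toFinset.card := by
        apply Finset.sum_congr rfl
        intro l hl
        exact (List.toFinset_card_of_nodup (h.1 l hl).2.1).symm
    _ = (P.biUnion List.toFinset).card := (Finset.card_biUnion hdisj).symm
    _ ≤ G.verts.card := by
        apply Finset.card_le_card
        intro v hv
        obtain ⟨l, hl, hvl⟩ := Finset.mem_biUnion.mp hv
        exact (h.1 l hl).2.2.1 v (List.mem_toFinset.mp hvl)

lemma card_le_packSize {n : ℕ} (G : PartGraph n) (P : Finset (List ℕ))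
    (h : IsPacking G P) : P.card ≤ packSize P := by
  calc P.card = ∑ _l ∈ P, 1 := Finset.card_eq_sum_ones P
    _ ≤ packSize P := Finset.sum_le_sum fun l hl => le_trans (by norm_num) (h.1 l hl).1

/-- Every `Γ`-packing extends to a maximal one. -/
lemma exists_maximal_ext (I : IKEP) (P : Finset (List ℕ)) (hP : IsGammaPacking I P) :
    ∃ Q, IsGammaPacking I Q ∧ P ⊆ Q ∧ IsMaximalGammaPacking I Q := by
  set S : Set ℕ := {m | ∃ Q, IsGammaPacking I Q ∧ P ⊆ Q ∧ Q.card = m} with hS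
  have hne : S.Nonempty := ⟨P.card, P, hP, subset_rfl, rfl⟩
  have hbdd : BddAbove S := by
    refine ⟨I.G.verts.card, ?_⟩
    rintro m ⟨Q, hQ, _, rfl⟩
    exact le_trans (card_le_packSize I.G Q hQ.1) (packSize_le_card I.G Q hQ.1)
  obtain ⟨Q, hQ, hPQ, hQcard⟩ := Nat.sSup_mem hne hbdd
  refine ⟨Q, hQ, hPQ, hQ, ?_⟩
  intro R hR hQR
  by_contra hne'
  have hlt : Q ⊂ R := ⟨hQR, fun h => hne' (Finset.Subset.antisymm h hQR)⟩
  have h1 : R.card ≤ sSup S := le_csSup hbdd ⟨R, hR, subset_trans hPQ hQR, rfl⟩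
  have h2 : Q.card < R.card := Finset.card_lt_card hlt
  omega

/-- `natSize` is achieved. -/
lemma natSize_achieved (I : IKEP) (i : Fin I.n) :
    ∃ P, IsPacking I.G P ∧ (∀ l ∈ P, IsNationalTo I.G l i) ∧
      (∀ l ∈ P, (l.length : ℕ∞) ≤ I.prm.ncl i) ∧ packSize P = natSize I i := by
  set S : Set ℕ := {m | ∃ P, IsPacking I.G P ∧ (∀ l ∈ P, IsNationalTo I.G l i) ∧
    (∀ l ∈ P, (l.length : ℕ∞) ≤ I.prm.ncl i) ∧ packSize P = m} with hS
  have hne : S.Nonempty := by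
    refine ⟨0, ∅, ⟨?_, ?_⟩, ?_, ?_, rfl⟩ <;> simp [IsPacking]
  have hbdd : BddAbove S := by
    refine ⟨I.G.verts.card, ?_⟩
    rintro m ⟨P, hP, _, _, rfl⟩
    exact packSize_le_card I.G P hP
  have := Nat.sSup_mem hne hbdd
  obtain ⟨P, h1, h2, h3, h4⟩ := this
  exact ⟨P, h1, h2, h3, h4⟩

lemma cycUtil_of_national {n : ℕ} (G : PartGraph n) (i : Fin n) (l : List ℕ)
    (h : IsNationalTo G l i) : cycUtil G i l = l.length := by
  unfold cycUtil
  rw [List.filter_eq_self.mpr]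
  intro a ha
  simpa using h a ha

/-- Key lemma: there is a maximal `Γ`-packing whose utility for every country
is at least that country's national optimum. -/
lemma exists_good_packing (I : IKEP) :
    ∃ Q, IsMaximalGammaPacking I Q ∧ ∀ i, (natSize I i : ℕ) ≤ packUtil I.G i Q := by
  choose Pn h1 h2 h3 h4 using natSize_achieved I
  set P0 : Finset (List ℕ) := Finset.univ.biUnion Pn with hP0
  have hmem : ∀ l ∈ P0, ∃ i, l ∈ Pn i := by
    intro l hl
    obtain ⟨i, _, hi⟩ := Finset.mem_biUnion.mp hl
    exact ⟨i, hi⟩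
  have hP0pack : IsGammaPacking I P0 := by
    refine ⟨⟨?_, ?_⟩, ?_⟩
    · intro l hl
      obtain ⟨i, hi⟩ := hmem l hl
      exact (h1 i).1 l hi
    · intro l hl l' hl' hne v hv hv'
      obtain ⟨i, hi⟩ := hmem l hl
      obtain ⟨j, hj⟩ := hmem l' hl'
      by_cases hij : i = j
      · subst hij
        exact (h1 i).2 l hi l' hj hne v hv hv'
      · exact hij (((h2 i l hi v hv).symm.trans (h2 j l' hj v hv')).symm ▸ rfl)
    · intro l hl
      obtain ⟨i, hi⟩ := hmem l hl
      exact ⟨(h1 i).1 l hi, Or.inl ⟨i, h2 i l hi, h3 i l hi⟩⟩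
  obtain ⟨Q, hQ, hPQ, hQmax⟩ := exists_maximal_ext I P0 hP0pack
  refine ⟨Q, hQmax, ?_⟩
  intro i
  have hsub : Pn i ⊆ Q := subset_trans (fun l hl =>
    Finset.mem_biUnion.mpr ⟨i, Finset.mem_univ i, hl⟩) hPQ
  calc (natSize I i : ℕ) = packSize (Pn i) := (h4 i).symm
    _ = packUtil I.G i (Pn i) := by
        unfold packSize packUtil
        exact Finset.sum_congr rfl fun l hl => (cycUtil_of_national I.G i l (h2 i l hl)).symm
    _ ≤ packUtil I.G i Q :=
        Finset.sum_le_sum_of_subset_of_nonneg hsub (fun _ _ _ => Nat.zero_le _)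

/-- There exists a mechanism that is both maximal (with
probability 1 it returns a maximal `Γ`-cycle packing) and individually
rational. -/
theorem exists_maximal_and_IR_mechanism :
    ∃ M : Mechanism,
      (∀ I : IKEP, ∀ P, M.dist I P ≠ 0 → IsMaximalGammaPacking I P) ∧
      IndRational M := by
  classical
  choose pick hpick1 hpick2 using exists_good_packing
  refine ⟨⟨fun I => Finsupp.single (pick I) 1, ?_, ?_, ?_⟩, ?_, ?_⟩
  · intro I P
    rcases eq_or_ne P (pick I) with h | h
    · subst h; simp
    · simp [Finsupp.single_eq_of_ne h]
  · intro I
    rw [Finsupp.sum_single_index] <;> simp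
  · intro I P hP
    have : P = pick I := by
      by_contra h
      exact hP (Finsupp.single_eq_of_ne h)
    subst this
    exact (hpick1 I).1
  · intro I P hP
    have : P = pick I := by
      by_contra h
      exact hP (Finsupp.single_eq_of_ne h)
    subst this
    exact hpick1 I
  · intro I i
    have : expUtil ⟨fun I => Finsupp.single (pick I) 1, by
        intro I P
        rcases eq_or_ne P (pick I) with h | h
        · subst h; simp
        · simp [Finsupp.single_eq_of_ne h], by
        intro I
        rw [Finsupp.sum_single_index] <;> simp, by
        intro I P hP
        have : P = pick I := by
          by_contra h
          exact hP (Finsupp.single_eq_of_ne h)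
        subst this
        exact (hpick1 I).1⟩ I i = (packUtil I.G i (pick I) : ℝ) := by
      unfold expUtil
      rw [Finsupp.sum_single_index] <;> simp
    rw [this]
    exact_mod_cast hpick2 I i
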